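/- For a\in(0,1/2] and b>0 with 4a-4a^2-b^2>0, set D=\sqrt{4a-4a^2-b^2} (positive real square root) and define m(a,b) = -\tfrac{1}{2}\Big[(1-b)\arctan\frac{bD}{2-2a-b^2} - a\arctan\frac{bD}{2a-2a^2-b^2} - 2b\arctan\frac{D}{2+b-2a}\Big]. Then for every \varepsilon>0 there exists \delta>0 such that for all a\in(0,1/2] and all b>0 with b<\delta and b^2/a<\delta, one has \Big|\frac{m(a,b)}{b\arctan\sqrt{a/(1-a)}} - 1\Big| < \varepsilon. That is, m \sim b\arctan\sqrt{a/(1-a)} as b\to 0 and b^2/a\to 0. -/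

import Mathlib

open Real

lemma my_arctan_le_self {x : ℝ} (hx : 0 ≤ x) : Real.arctan x ≤ x := by
  have hmono : Monotone (fun x : ℝ => x - Real.arctan x) := by
    apply monotone_of_deriv_nonneg
    · exact differentiable_id.sub Real.differentiable_arctan
    · intro y
      have h : HasDerivAt (fun x : ℝ => x - Real.arctan x) (1 - 1 / (1 + y ^ 2)) y :=
        (hasDerivAt_id y).sub (Real.hasDerivAt_arctan y)
      rw [h.deriv]
      have : 1 / (1 + y ^ 2) ≤ 1 := by
        rw [div_le_one (by positivity)]; nlinarith [sq_nonneg y]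
      linarith
  have := hmono hx
  simpa [Real.arctan_zero] using this

lemma my_self_sub_cube_le_arctan {x : ℝ} (hx : 0 ≤ x) : x - x ^ 3 / 3 ≤ Real.arctan x := by
  have hmono : Monotone (fun x : ℝ => Real.arctan x - x + x ^ 3 / 3) := by
    apply monotone_of_deriv_nonneg
    · exact (Real.differentiable_arctan.sub differentiable_id).add
        ((differentiable_pow 3).div_const 3)
    · intro y
      have h : HasDerivAt (fun x : ℝ => Real.arctan x - x + x ^ 3 / 3)
          (1 / (1 + y ^ 2) - 1 + (3 : ℕ) * y ^ 2 / 3) y :=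
        ((Real.hasDerivAt_arctan y).sub (hasDerivAt_id y)).add
          ((hasDerivAt_pow 3 y).div_const 3)
      rw [h.deriv]
      have h1 : (0:ℝ) < 1 + y ^ 2 := by positivity
      have : 1 - y ^ 2 ≤ 1 / (1 + y ^ 2) := by
        rw [le_div_iff₀ h1]; nlinarith [sq_nonneg (y^2)]
      push_cast
      linarith
  have := hmono hx
  simp only [Real.arctan_zero] at this
  norm_num at this
  linarith

lemma my_abs_arctan_sub (x y : ℝ) : |Real.arctan x - Real.arctan y| ≤ |x - y| := by
  have := convex_univ.norm_image_sub_le_of_norm_deriv_le (f := Real.arctan)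
    (fun z _ => Real.differentiableAt_arctan z)
    (fun z _ => by
      rw [Real.deriv_arctan]
      rw [Real.norm_eq_abs, abs_of_pos (by positivity : (0:ℝ) < 1 / (1 + z ^ 2))]
      rw [div_le_one (by positivity)]
      nlinarith [sq_nonneg z])
    (Set.mem_univ y) (Set.mem_univ x)
  simpa [Real.norm_eq_abs] using this

lemma my_abs_arctan_err {x : ℝ} (hx : 0 ≤ x) : |Real.arctan x - x| ≤ x^3/3 := by
  have h1 := my_arctan_le_self hx
  have h2 := my_self_sub_cube_le_arctan hx
  rw [abs_le]
  refine ⟨by linarith, by nlinarith [pow_nonneg hx 3]⟩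

lemma aux_sqrt_facts {t D b : ℝ} (h4 : t^2 - D^2 = b^2) (hD0 : 0 < D) (ht : 0 < t) :
    D ≤ t ∧ (t - D)*t ≤ b^2 := by
  have h1 : D ≤ t := by nlinarith [sq_nonneg b]
  refine ⟨h1, ?_⟩
  nlinarith [mul_nonneg (sub_nonneg.mpr h1) hD0.le]

lemma aux_s1half {s1 a : ℝ} (hs1 : s1^2 = 1-a) (hs10 : 0 < s1) (ha2 : a ≤ 1/2) :
    7/10 ≤ s1 := by nlinarith

lemma aux_hQ {a b : ℝ} (ha0 : 0 < a) (ha2 : a ≤ 1/2) (hba : b^2 ≤ a/2) :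
    a/2 ≤ 2*a - 2*a^2 - b^2 := by
  nlinarith [mul_nonneg ha0.le (by linarith : (0:ℝ) ≤ 1 - 2*a)]

lemma aux_X1le {a b sa D : ℝ} (hb0 : 0 < b) (hsa0 : 0 < sa) (hDsa : D ≤ 2*sa)
    (hP : (3:ℝ)/4 ≤ 2 - 2*a - b^2) : b*D ≤ 3*b*sa*(2-2*a-b^2) := by
  nlinarith [mul_le_mul_of_nonneg_left hDsa hb0.le,
    mul_le_mul_of_nonneg_left hP (by positivity : (0:ℝ) ≤ 3*b*sa)]

lemma aux_e1 {b sa X1 : ℝ} (hb0 : 0 < b) (hb2 : b ≤ 1/2) (hsa2 : sa^2 ≤ 1/2)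
    (hsa0 : 0 < sa) (hX1 : 0 ≤ X1) (hcube : X1^3 ≤ (3*b*sa)^3) :
    X1^3/3 ≤ 3*b*(b*sa) := by
  have h1 : b*sa^2 ≤ 1/4 := by nlinarith
  nlinarith [mul_pos hb0 hsa0, mul_pos (mul_pos hb0 hb0) hsa0, sq_nonneg (b*sa)]

lemma aux_X2le {a b sa D : ℝ} (hb0 : 0 < b) (hsa0 : 0 < sa) (hsa : sa^2 = a)
    (hDsa : D ≤ 2*sa) (hQ : a/2 ≤ 2*a - 2*a^2 - b^2) :
    b*D*sa ≤ 4*b*(2*a - 2*a^2 - b^2) := by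
  nlinarith [mul_le_mul_of_nonneg_right (mul_le_mul_of_nonneg_left hDsa hb0.le) hsa0.le]

lemma aux_e2 {a t X2 c B : ℝ} (ha0 : 0 < a) (habs : |t| ≤ X2^3/3)
    (h64 : a*X2^3 ≤ 64*c*B) (hcB : 0 ≤ c*B) : a*|t| ≤ 22*(c*B) := by
  nlinarith [mul_le_mul_of_nonneg_left habs ha0.le, abs_nonneg t]

lemma aux_e3 {a b c sa D : ℝ} (ha0 : 0 < a) (ha2 : a ≤ 1/2) (hb0 : 0 < b)
    (hsa0 : 0 < sa) (hc0 : 0 ≤ c) (hca : c*a = b^2) (hD0 : 0 < D) (hDsa : D ≤ 2*sa)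
    (hP : (3:ℝ)/4 ≤ 2-2*a-b^2) (hQ : a/2 ≤ 2*a-2*a^2-b^2) :
    b^3*D*(1-a) ≤ 6*c*(b*sa)*((2-2*a-b^2)*(2*a-2*a^2-b^2)) := by
  have h1a : (0:ℝ) < 1-a := by linarith
  have hD1a : D*(1-a) ≤ 2*sa := by nlinarith [mul_pos hD0 ha0]
  have hL : b^3*(D*(1-a)) ≤ b^3*(2*sa) :=
    mul_le_mul_of_nonneg_left hD1a (pow_nonneg hb0.le 3)
  have hb3 : b^3*(2*sa) = 2*(c*(b*sa))*a := by linear_combination (-(2*b*sa))*hca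
  have hPQ : (3:ℝ)/4*(a/2) ≤ (2-2*a-b^2)*(2*a-2*a^2-b^2) :=
    mul_le_mul hP hQ (by linarith) (by linarith)
  have hcbs : (0:ℝ) ≤ 6*(c*(b*sa)) := by positivity
  nlinarith [mul_le_mul_of_nonneg_left hPQ hcbs,
    mul_nonneg (mul_nonneg hc0 (mul_nonneg hb0.le hsa0.le)) ha0.le]

lemma aux_B3 {a b c sa s1 D : ℝ} (ha0 : 0 < a) (ha2 : a ≤ 1/2) (hb0 : 0 < b)
    (hc0 : 0 ≤ c) (hca : c*a = b^2) (hsa : sa^2 = a) (hsa0 : 0 < sa)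
    (hs1 : s1^2 = 1-a) (hs10 : 0 < s1) (hs1le : s1 ≤ 1) (hs1half : 7/10 ≤ s1)
    (hD0 : 0 < D) (hDle : D ≤ 2*sa*s1) (hgap : (2*sa*s1 - D)*(2*sa*s1) ≤ b^2) :
    |D*s1 - sa*(2+b-2*a)| ≤ 3*(b+c)*sa*((2+b-2*a)*s1) := by
  have hR : (1:ℝ) ≤ 2+b-2*a := by linarith
  have hh1 : sa*s1^2 = sa*(1-a) := by rw [hs1]
  have hnum1 : D*s1 - sa*(2+b-2*a) ≤ 0 := by
    nlinarith [mul_le_mul_of_nonneg_right hDle hs10.le, mul_nonneg hsa0.le hb0.le]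
  have hcsa : c*sa^2 = c*a := by rw [hsa]
  have h' : 2*sa*(s1*(2*sa*s1-D)) ≤ c*sa^2 := by nlinarith [hgap, hca]
  have hgap2 : s1*(2*sa*s1-D) ≤ c*sa/2 := by
    nlinarith [h', hsa0, mul_pos hsa0 hs10]
  have hnum2 : -(c*sa/2) - b*sa ≤ D*s1 - sa*(2+b-2*a) := by
    nlinarith [hgap2, hh1]
  have hRs1 : 7/10 ≤ (2+b-2*a)*s1 := by nlinarith [hR, hs1half, hs10]
  have h3bc : (0:ℝ) ≤ 3*(b+c)*sa := by positivity
  rw [abs_le]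
  constructor
  · nlinarith [hnum2, mul_le_mul_of_nonneg_left hRs1 h3bc,
      mul_nonneg hb0.le hsa0.le, mul_nonneg hc0 hsa0.le]
  · nlinarith [hnum1, mul_le_mul_of_nonneg_left hRs1 h3bc,
      mul_nonneg hb0.le hsa0.le, mul_nonneg hc0 hsa0.le]

lemma aux_T23 {s sa T : ℝ} (h2 : s - s^3/3 ≤ T) (hlb : sa ≤ s) (hub : s ≤ 1)
    (h0 : 0 ≤ s) : 2/3*sa ≤ T := by
  nlinarith [mul_nonneg h0 (by nlinarith : (0:ℝ) ≤ 1 - s^2)]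

lemma aux_sum {b c sa : ℝ} (hb0 : 0 ≤ b) (hc0 : 0 ≤ c) (hsa0 : 0 ≤ sa) :
    (1/2)*((6*b+28*c)*(b*sa)) + b*(3*(b+c)*sa) ≤ 17*(b+c)*(b*sa) := by
  nlinarith [mul_nonneg (mul_nonneg hb0 hb0) hsa0]

lemma aux_final {M b sa T c ε : ℝ} (hkey : |M| ≤ 17*(b+c)*(b*sa)) (hsum : b + c < ε/30)
    (hT : 2/3*sa ≤ T) (hb0 : 0 < b) (hsa0 : 0 < sa) (hc0 : 0 ≤ c) (hε : 0 < ε) :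
    |M| < ε*(b*T) := by
  have hbsa : 0 < b*sa := mul_pos hb0 hsa0
  nlinarith [mul_lt_mul_of_pos_right hsum hbsa,
    mul_le_mul_of_nonneg_left hT (by positivity : (0:ℝ) ≤ ε*b)]

/-- `m(a,b)` as in equation (71) of the paper. -/
noncomputable def mConst (a b : ℝ) : ℝ :=
  -(1 / 2) *
    ((1 - b) * Real.arctan (b * Real.sqrt (4 * a - 4 * a ^ 2 - b ^ 2) / (2 - 2 * a - b ^ 2))
      - a * Real.arctan (b * Real.sqrt (4 * a - 4 * a ^ 2 - b ^ 2) / (2 * a - 2 * a ^ 2 - b ^ 2))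
      - 2 * b * Real.arctan (Real.sqrt (4 * a - 4 * a ^ 2 - b ^ 2) / (2 + b - 2 * a)))

set_option maxHeartbeats 1000000 in
/-- `m ∼ b arctan √(a/(1-a))` as `b → 0` and `b²/a → 0`, uniformly for
`a ∈ (0, 1/2]`. -/
theorem mConst_asymptotics :
    ∀ ε > (0 : ℝ), ∃ δ > (0 : ℝ), ∀ a b : ℝ,
      a ∈ Set.Ioc (0 : ℝ) (1 / 2) → 0 < b → 4 * a - 4 * a ^ 2 - b ^ 2 > 0 →
      b < δ → b ^ 2 / a < δ →
      |mConst a b / (b * Real.arctan (Real.sqrt (a / (1 - a)))) - 1| < ε := by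
  intro ε hε
  refine ⟨min (1/2) (ε/60), by positivity, ?_⟩
  intro a b haI hb0 hA hbδ hcδ
  obtain ⟨ha0, ha2⟩ := haI
  have hδ2 : min (1/2) (ε/60) ≤ 1/2 := min_le_left _ _
  have hδε : min (1/2) (ε/60) ≤ ε/60 := min_le_right _ _
  set c := b^2/a with hcdef
  have hc0 : 0 ≤ c := by rw [hcdef]; positivity
  have hca : c * a = b^2 := by rw [hcdef]; field_simp
  have hb2 : b < 1/2 := lt_of_lt_of_le hbδ hδ2
  have hc2 : c < 1/2 := lt_of_lt_of_le hcδ hδ2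
  have hbε : b < ε/60 := lt_of_lt_of_le hbδ hδε
  have hcε : c < ε/60 := lt_of_lt_of_le hcδ hδε
  have h1a : 0 < 1 - a := by linarith
  set sa := Real.sqrt a with hsadef
  set s1 := Real.sqrt (1-a) with hs1def
  have hsa : sa^2 = a := Real.sq_sqrt ha0.le
  have hsa0 : 0 < sa := Real.sqrt_pos.mpr ha0
  have hs1 : s1^2 = 1 - a := Real.sq_sqrt h1a.le
  have hs10 : 0 < s1 := Real.sqrt_pos.mpr h1a
  have hs1le : s1 ≤ 1 := Real.sqrt_le_one.mpr (by linarith)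
  have hsale : sa ≤ s1 := Real.sqrt_le_sqrt (by linarith)
  have hsa1 : sa ≤ 1 := le_trans hsale hs1le
  clear_value c sa s1
  have hs1half : (7:ℝ)/10 ≤ s1 := aux_s1half hs1 hs10 ha2
  have hba : b^2 ≤ a/2 := by nlinarith [hca, ha0, hc2.le]
  -- D and its bounds
  set D := Real.sqrt (4*a - 4*a^2 - b^2) with hDdef
  have hD : D^2 = 4*a - 4*a^2 - b^2 := Real.sq_sqrt hA.le
  have hD0 : 0 < D := Real.sqrt_pos.mpr hA
  clear_value D
  have h4 : (2*sa*s1)^2 - D^2 = b^2 := by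
    linear_combination (4*s1^2)*hsa + (4*a)*hs1 - hD
  obtain ⟨hDle, hgap⟩ := aux_sqrt_facts h4 hD0 (by positivity)
  have hDsa : D ≤ 2*sa := le_trans hDle (by nlinarith [hsa0.le, hs1le])
  -- denominators
  have hbsq : b^2 < 1/4 := by nlinarith [hb2, hb0]
  have hP : (3:ℝ)/4 ≤ 2 - 2*a - b^2 := by linarith
  have hPpos : (0:ℝ) < 2 - 2*a - b^2 := by linarith
  have hQ : a/2 ≤ 2*a - 2*a^2 - b^2 := aux_hQ ha0 ha2 hba
  have hQpos : (0:ℝ) < 2*a - 2*a^2 - b^2 := by linarith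
  have hR : (1:ℝ) ≤ 2 + b - 2*a := by linarith
  have hRpos : (0:ℝ) < 2 + b - 2*a := by linarith
  set X1 := b*D/(2-2*a-b^2) with hX1def
  set X2 := b*D/(2*a-2*a^2-b^2) with hX2def
  set X3 := D/(2+b-2*a) with hX3def
  clear_value X1 X2 X3
  have hX1pos : 0 ≤ X1 := by
    rw [hX1def]; exact div_nonneg (mul_nonneg hb0.le hD0.le) hPpos.le
  have hX2pos : 0 ≤ X2 := by
    rw [hX2def]; exact div_nonneg (mul_nonneg hb0.le hD0.le) hQpos.le
  have hX3pos : 0 ≤ X3 := by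
    rw [hX3def]; exact div_nonneg hD0.le hRpos.le
  have hX1le : X1 ≤ 3*b*sa := by
    rw [hX1def, div_le_iff₀ hPpos]
    exact aux_X1le hb0 hsa0 hDsa hP
  -- error 1
  have e1 : |Real.arctan X1 - X1| ≤ 3*b*(b*sa) := by
    refine le_trans (my_abs_arctan_err hX1pos) ?_
    exact aux_e1 hb0 hb2.le (by rw [hsa]; linarith) hsa0 hX1pos
      (pow_le_pow_left₀ hX1pos hX1le 3)
  -- error 2
  have hX2le' : X2 * sa ≤ 4 * b := by
    rw [hX2def, div_mul_eq_mul_div, div_le_iff₀ hQpos]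
    exact aux_X2le hb0 hsa0 hsa hDsa hQ
  have hX2cube : (X2*sa)^3 ≤ (4*b)^3 :=
    pow_le_pow_left₀ (mul_nonneg hX2pos hsa0.le) hX2le' 3
  have eq1 : a * X2^3 * sa = (X2*sa)^3 := by linear_combination (-(X2^3*sa))*hsa
  have eq2 : (64*c*(b*sa)) * sa = (4*b)^3 := by
    linear_combination 64*b*hca + 64*c*b*hsa
  have hX2cube' : a * X2^3 ≤ 64*c*(b*sa) := by
    have key : a * X2^3 * sa ≤ (64*c*(b*sa)) * sa := by rw [eq1, eq2]; exact hX2cube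
    exact le_of_mul_le_mul_right key hsa0
  have e2 : a * |Real.arctan X2 - X2| ≤ 22*(c*(b*sa)) :=
    aux_e2 ha0 (my_abs_arctan_err hX2pos) hX2cube'
      (mul_nonneg hc0 (mul_nonneg hb0.le hsa0.le))
  -- error 3
  have hid : X1 - a*X2 = -(b^3*D*(1-a))/((2-2*a-b^2)*(2*a-2*a^2-b^2)) := by
    rw [hX1def, hX2def]
    rw [mul_div_assoc', div_sub_div _ _ hPpos.ne' hQpos.ne']
    rw [div_eq_div_iff (mul_ne_zero hPpos.ne' hQpos.ne') (mul_ne_zero hPpos.ne' hQpos.ne')]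
    ring
  have e3 : |X1 - a*X2| ≤ 6*c*(b*sa) := by
    rw [hid, abs_div, abs_neg,
      abs_of_nonneg (mul_nonneg (mul_nonneg (pow_nonneg hb0.le 3) hD0.le) h1a.le),
      abs_of_pos (mul_pos hPpos hQpos), div_le_iff₀ (mul_pos hPpos hQpos)]
    exact aux_e3 ha0 ha2 hb0 hsa0 hc0 hca hD0 hDsa hP hQ
  -- error 4
  have e4 : b * X1 ≤ 3*b*(b*sa) := by
    have := mul_le_mul_of_nonneg_left hX1le hb0.le
    linarith
  -- Claim A
  have hE : |(1-b)*Real.arctan X1 - a*Real.arctan X2| ≤ (6*b+28*c)*(b*sa) := by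
    have hdec : (1-b)*Real.arctan X1 - a*Real.arctan X2 =
        (1-b)*(Real.arctan X1 - X1) + (-(a*(Real.arctan X2 - X2))) + (-(b*X1)) + (X1 - a*X2) := by
      ring
    rw [hdec]
    have t1 : |(1-b)*(Real.arctan X1 - X1)| ≤ 3*b*(b*sa) := by
      rw [abs_mul, abs_of_pos (show (0:ℝ) < 1-b by linarith)]
      exact le_trans (mul_le_of_le_one_left (abs_nonneg _) (by linarith)) e1
    have t2 : |(-(a*(Real.arctan X2 - X2)))| ≤ 22*(c*(b*sa)) := by
      rw [abs_neg, abs_mul, abs_of_pos ha0]; exact e2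
    have t3 : |(-(b*X1))| ≤ 3*b*(b*sa) := by
      rw [abs_neg, abs_of_nonneg (mul_nonneg hb0.le hX1pos)]; exact e4
    calc |(1-b)*(Real.arctan X1 - X1) + (-(a*(Real.arctan X2 - X2))) + (-(b*X1)) + (X1 - a*X2)|
        ≤ |(1-b)*(Real.arctan X1 - X1) + (-(a*(Real.arctan X2 - X2))) + (-(b*X1))| + |X1 - a*X2| :=
          abs_add_le _ _
      _ ≤ |(1-b)*(Real.arctan X1 - X1) + (-(a*(Real.arctan X2 - X2)))| + |(-(b*X1))| + |X1 - a*X2| := by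
          gcongr; exact abs_add_le _ _
      _ ≤ |(1-b)*(Real.arctan X1 - X1)| + |(-(a*(Real.arctan X2 - X2)))| + |(-(b*X1))| + |X1 - a*X2| := by
          gcongr; exact abs_add_le _ _
      _ ≤ (6*b+28*c)*(b*sa) := by linarith [t1, t2, t3, e3]
  -- rewrite the goal
  have hsdiv : Real.sqrt (a/(1-a)) = sa/s1 := by
    rw [hsadef, hs1def]; exact Real.sqrt_div ha0.le _
  rw [hsdiv]
  set T := Real.arctan (sa/s1) with hTdef
  -- Claim B
  have hid3 : X3 - sa/s1 = (D*s1 - sa*(2+b-2*a))/((2+b-2*a)*s1) := by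
    rw [hX3def]; field_simp
  have hB3 : |Real.arctan X3 - T| ≤ 3*(b+c)*sa := by
    refine le_trans (my_abs_arctan_sub X3 (sa/s1)) ?_
    rw [hid3, abs_div, abs_of_pos (mul_pos hRpos hs10), div_le_iff₀ (mul_pos hRpos hs10)]
    exact aux_B3 ha0 ha2 hb0 hc0 hca hsa hsa0 hs1 hs10 hs1le hs1half hD0 hDle hgap
  -- T lower bound
  have hs_pos : 0 < sa/s1 := div_pos hsa0 hs10
  have hs_lb : sa ≤ sa/s1 := by
    rw [le_div_iff₀ hs10]; exact mul_le_of_le_one_right hsa0.le hs1le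
  have hs_ub : sa/s1 ≤ 1 := by rw [div_le_one hs10]; exact hsale
  have hT23 : 2/3*sa ≤ T :=
    aux_T23 (my_self_sub_cube_le_arctan hs_pos.le) hs_lb hs_ub hs_pos.le
  have hTpos : 0 < T := lt_of_lt_of_le (by positivity) hT23
  have hbT : 0 < b*T := mul_pos hb0 hTpos
  -- unfold mConst
  have hm : mConst a b = -(1/2)*((1-b)*Real.arctan X1 - a*Real.arctan X2 - 2*b*Real.arctan X3) := by
    unfold mConst
    rw [← hDdef, ← hX1def, ← hX2def, ← hX3def]
  rw [div_sub_one hbT.ne', abs_div, abs_of_pos hbT, div_lt_iff₀ hbT]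
  have hdec2 : mConst a b - b*T =
      (-(1/2))*((1-b)*Real.arctan X1 - a*Real.arctan X2) + b*(Real.arctan X3 - T) := by
    rw [hm]; ring
  have hkey : |mConst a b - b*T| ≤ 17*(b+c)*(b*sa) := by
    rw [hdec2]
    calc |(-(1/2))*((1-b)*Real.arctan X1 - a*Real.arctan X2) + b*(Real.arctan X3 - T)|
        ≤ |(-(1/2))*((1-b)*Real.arctan X1 - a*Real.arctan X2)| + |b*(Real.arctan X3 - T)| :=
          abs_add_le _ _
      _ = (1/2)*|(1-b)*Real.arctan X1 - a*Real.arctan X2| + b*|Real.arctan X3 - T| := by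
          rw [abs_mul, abs_mul, abs_of_pos hb0]; norm_num
      _ ≤ (1/2)*((6*b+28*c)*(b*sa)) + b*(3*(b+c)*sa) :=
          add_le_add (mul_le_mul_of_nonneg_left hE (by norm_num))
            (mul_le_mul_of_nonneg_left hB3 hb0.le)
      _ ≤ 17*(b+c)*(b*sa) := aux_sum hb0.le hc0 hsa0.le
  have hsum : b + c < ε/30 := by linarith
  exact aux_final hkey hsum hT23 hb0 hsa0 hc0 hε
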